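/- Let k be an infinite field and let Δ = Δ^i * ∂Δ^j be the join of an i-dimensional simplex with the boundary complex of a j-dimensional simplex. Suppose Θ is a generic l.s.o.p. for k[Δ]. Then for any (j−1)-dimensional face σ of Δ, the face monomial x_σ generates the one-dimensional vector space (k[Δ]/Θ)_j ≅ k. -/

import Mathlib

open Finset MvPolynomial Module

/-- A finite collection of finite subsets of `ℕ`, thought of as the set of faces of a
(finite abstract) simplicial complex with vertices in `ℕ`. -/
abbrev FaceSet : Type := Finset (Finset ℕ)

/-- `Δ` is an abstract simplicial complex: it contains the empty face and is closed
under taking subsets. -/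
def IsComplex (Δ : FaceSet) : Prop :=
  ∅ ∈ Δ ∧ ∀ σ ∈ Δ, ∀ τ ⊆ σ, τ ∈ Δ

/-- `hasDim Δ n` : the simplicial complex `Δ` is `n`-dimensional, i.e. every face has at
most `n+1` vertices and some face has exactly `n+1` vertices. -/
def hasDim (Δ : FaceSet) (n : ℕ) : Prop :=
  (∀ σ ∈ Δ, σ.card ≤ n + 1) ∧ ∃ σ ∈ Δ, σ.card = n + 1

/-- `fNum Δ j` is the number of faces of `Δ` of cardinality `j`, i.e. the face number
`f_{j-1}` counting `(j-1)`-dimensional faces. -/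
def fNum (Δ : FaceSet) (j : ℕ) : ℕ := (Δ.filter fun σ => σ.card = j).card

/-- The `h`-vector of a `(d-1)`-dimensional complex:
`h_i = ∑_{j=0}^{i} (-1)^{i-j} C(d-j, d-i) f_{j-1}`. -/
def hVec (Δ : FaceSet) (d i : ℕ) : ℤ :=
  ∑ j ∈ Finset.range (i + 1),
    (-1 : ℤ) ^ (i - j) * ((d - j).choose (d - i) : ℤ) * (fNum Δ j : ℤ)

/-- The `g`-vector: `g_0 = h_0` and `g_{i+1} = h_{i+1} - h_i`. -/
def gVec (Δ : FaceSet) (d : ℕ) : ℕ → ℤ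
  | 0 => hVec Δ d 0
  | i + 1 => hVec Δ d (i + 1) - hVec Δ d i

/-- `pseudoPow a i = a^⟨i⟩`, the `i`-th pseudopower of `a`: writing (greedily)
`a = C(a_i,i) + C(a_{i-1},i-1) + ⋯ + C(a_j,j)` with `a_i > a_{i-1} > ⋯ > a_j ≥ j ≥ 1`,
`a^⟨i⟩ = C(a_i+1,i+1) + ⋯ + C(a_j+1,j+1)`; also `0^⟨i⟩ = 0`. -/
def pseudoPow : ℕ → ℕ → ℕ
  | _, 0 => 0
  | 0, _ + 1 => 0
  | a + 1, i + 1 =>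
    let n := Nat.findGreatest (fun n => Nat.choose n (i + 1) ≤ a + 1) (a + i + 2)
    Nat.choose (n + 1) (i + 2) + pseudoPow (a + 1 - Nat.choose n (i + 1)) i
  termination_by a i => i

/-- `(g_0, g_1, …, g_l)` is an `M`-vector: `g_0 = 1` and
`0 ≤ g_{i+1} ≤ g_i^⟨i⟩` for all `i ≥ 1` (with `i+1 ≤ l`). -/
def IsMVector (g : ℕ → ℤ) (l : ℕ) : Prop :=
  g 0 = 1 ∧ ∀ i, 1 ≤ i → i + 1 ≤ l →
    0 ≤ g (i + 1) ∧ g (i + 1) ≤ (pseudoPow (g i).toNat i : ℤ)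

/-- The face monomial `x_σ = ∏_{i ∈ σ} x_i`. -/
noncomputable def faceMonomial (k : Type*) [CommRing k] (σ : Finset ℕ) : MvPolynomial ℕ k :=
  ∏ i ∈ σ, X i

/-- The Stanley–Reisner ideal of `Δ`, generated by the squarefree monomials corresponding
to non-faces of `Δ`. -/
noncomputable def SRIdeal (k : Type*) [CommRing k] (Δ : FaceSet) : Ideal (MvPolynomial ℕ k) :=
  Ideal.span {f | ∃ s : Finset ℕ, s ∉ Δ ∧ f = faceMonomial k s}

/-- The quotient of the Stanley–Reisner ring `k[Δ]` by the ideal generated by a set `S`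
of polynomials (e.g. an l.s.o.p., possibly together with a further linear form). -/
abbrev QuotRing (k : Type*) [CommRing k] (Δ : FaceSet) (S : Set (MvPolynomial ℕ k)) : Type _ :=
  MvPolynomial ℕ k ⧸ (SRIdeal k Δ ⊔ Ideal.span S)

/-- The degree-`i` graded piece of `QuotRing k Δ S`: the image of the homogeneous
degree-`i` polynomials under the quotient map. -/
noncomputable def gradedPiece (k : Type*) [CommRing k] (Δ : FaceSet)
    (S : Set (MvPolynomial ℕ k)) (i : ℕ) : Submodule k (QuotRing k Δ S) :=
  Submodule.map (Ideal.Quotient.mkₐ k (SRIdeal k Δ ⊔ Ideal.span S)).toLinearMap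
    (homogeneousSubmodule ℕ k i)

/-- `Θ` is a linear system of parameters (l.s.o.p.) for `k[Δ]`: a family of `d` linear
forms such that `k[Δ]/Θ` is a finite-dimensional `k`-vector space. -/
def IsLSOP (k : Type*) [Field k] (Δ : FaceSet) {d : ℕ}
    (Θ : Fin d → MvPolynomial ℕ k) : Prop :=
  (∀ i, (Θ i).IsHomogeneous 1) ∧ FiniteDimensional k (QuotRing k Δ (Set.range Θ))

/-- Multiplication by (the class of) `ω` maps the degree-`i` piece of `k[Δ]/(S)` onto the
degree-`i+1` piece. -/
def mulMapSurjOn (k : Type*) [Field k] (Δ : FaceSet) (S : Set (MvPolynomial ℕ k))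
    (ω : MvPolynomial ℕ k) (i : ℕ) : Prop :=
  ∀ y ∈ gradedPiece k Δ S (i + 1), ∃ x ∈ gradedPiece k Δ S i,
    Ideal.Quotient.mk (SRIdeal k Δ ⊔ Ideal.span S) ω * x = y

/-- Multiplication by (the class of) `ω` is injective on the degree-`i` piece of `k[Δ]/(S)`. -/
def mulMapInjOn (k : Type*) [Field k] (Δ : FaceSet) (S : Set (MvPolynomial ℕ k))
    (ω : MvPolynomial ℕ k) (i : ℕ) : Prop :=
  ∀ x ∈ gradedPiece k Δ S i,
    Ideal.Quotient.mk (SRIdeal k Δ ⊔ Ideal.span S) ω * x = 0 → x = 0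

/-- `ω` is a weak Lefschetz element for `k[Δ]/Θ` (with `Δ` of dimension `d-1`):
a linear form such that multiplication `·ω : (k[Δ]/Θ)_i → (k[Δ]/Θ)_{i+1}` is injective or
surjective for every `i < d`. -/
def IsWLE (k : Type*) [Field k] (Δ : FaceSet) {d : ℕ}
    (Θ : Fin d → MvPolynomial ℕ k) (ω : MvPolynomial ℕ k) : Prop :=
  ω.IsHomogeneous 1 ∧ ∀ i < d,
    mulMapInjOn k Δ (Set.range Θ) ω i ∨ mulMapSurjOn k Δ (Set.range Θ) ω i

/-- The `(d-1)`-dimensional complex `Δ` has the weak Lefschetz property over `k`. -/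
def HasWLP (k : Type*) [Field k] (Δ : FaceSet) (d : ℕ) : Prop :=
  ∃ (Θ : Fin d → MvPolynomial ℕ k) (ω : MvPolynomial ℕ k), IsLSOP k Δ Θ ∧ IsWLE k Δ Θ ω

/-- The vertex set of `Δ`. -/
def vertices (Δ : FaceSet) : Finset ℕ := Δ.sup id

/-- `Θ` is a *generic* l.s.o.p. for `k[Δ]`: an l.s.o.p. such that every maximal
(`d × d`) minor of the associated coefficient matrix `M_Θ` is nonsingular. -/
def IsGenericLSOP (k : Type*) [Field k] (Δ : FaceSet) {d : ℕ}
    (Θ : Fin d → MvPolynomial ℕ k) : Prop :=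
  IsLSOP k Δ Θ ∧ ∀ g : Fin d → ℕ, Function.Injective g → (∀ a, g a ∈ vertices Δ) →
    (Matrix.of fun a b : Fin d =>
      MvPolynomial.coeff (Finsupp.single (g b) 1) (Θ a)).det ≠ 0

/-- The full simplex on vertex set `V`. -/
def simplexOn (V : Finset ℕ) : FaceSet := V.powerset

/-- The boundary complex of the simplex on vertex set `V`. -/
def boundaryOn (V : Finset ℕ) : FaceSet := V.powerset.erase V

/-- The join `Δ * Γ` of two complexes (on disjoint vertex sets). -/
def joinFS (Δ Γ : FaceSet) : FaceSet := Finset.image₂ (· ∪ ·) Δ Γ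

/-- The link `lk_σ Δ = {τ ∈ Δ : τ ∪ σ ∈ Δ, τ ∩ σ = ∅}`. -/
def linkFS (Δ : FaceSet) (σ : Finset ℕ) : FaceSet :=
  Δ.filter fun τ => Disjoint σ τ ∧ σ ∪ τ ∈ Δ

/-- The star `st_σ Δ = {τ ∈ Δ : τ ∪ σ ∈ Δ}`. -/
def starFS (Δ : FaceSet) (σ : Finset ℕ) : FaceSet :=
  Δ.filter fun τ => σ ∪ τ ∈ Δ

/-- `Δ'` is obtained from the pure `(d-1)`-dimensional complex `Δ` by a bistellar
`i`-move: the star of a `(d-1-i)`-face `σ` with `lk_σ Δ = ∂Δ^i` (on a vertex set `τ`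
which is not a face of `Δ`) is replaced by `∂σ * Δ^i`. -/
def BistellarMove (d i : ℕ) (Δ Δ' : FaceSet) : Prop :=
  ∃ σ τ : Finset ℕ, σ ∈ Δ ∧ σ.card = d - i ∧ τ.card = i + 1 ∧ τ ∉ Δ ∧
    linkFS Δ σ = boundaryOn τ ∧
    Δ' = (Δ \ starFS Δ σ) ∪ joinFS (boundaryOn σ) (simplexOn τ)

/-- `Δ` is a PL `(d-1)`-sphere: by Pachner's theorem, a complex obtainable from the
boundary `∂Δ^d` of a `d`-simplex by a finite sequence of bistellar moves. -/
def IsPLSphere (d : ℕ) (Δ : FaceSet) : Prop :=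
  ∃ V : Finset ℕ, V.card = d + 1 ∧
    Relation.ReflTransGen (fun K K' => ∃ i < d, BistellarMove d i K K') (boundaryOn V) Δ

/-- `Δ` is a PL manifold of dimension `n`: an `n`-dimensional simplicial complex all of
whose links of nonempty faces `σ` are PL spheres of dimension `n - |σ|`. -/
def IsPLManifold (n : ℕ) (Δ : FaceSet) : Prop :=
  IsComplex Δ ∧ hasDim Δ n ∧
    ∀ σ ∈ Δ, σ ≠ ∅ → IsPLSphere (n + 1 - σ.card) (linkFS Δ σ)

/-- The (finite) type of faces of `Δ` of cardinality `j`. -/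
abbrev FacesOf (Δ : FaceSet) (j : ℕ) : Type := ↥(Δ.filter fun σ => σ.card = j)

/-- The matrix of the simplicial boundary map from chains on faces of cardinality `j+1`
to chains on faces of cardinality `j`, with the usual signs (vertices ordered as in `ℕ`). -/
noncomputable def boundaryMatrix (k : Type*) [Field k] (Δ : FaceSet) (j : ℕ) :
    Matrix (FacesOf Δ j) (FacesOf Δ (j + 1)) k :=
  Matrix.of fun τ σ =>
    if (τ : Finset ℕ) ⊆ (σ : Finset ℕ) then
      ∑ t ∈ (σ : Finset ℕ) \ (τ : Finset ℕ),
        (-1 : k) ^ (((σ : Finset ℕ).filter fun s => s < t).card)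
    else 0

/-- The simplicial boundary map (as a linear map) of the reduced (augmented) chain complex
of `Δ` over `k`, from chains of cardinality `j+1` to chains of cardinality `j`. -/
noncomputable def bnd (k : Type*) [Field k] (Δ : FaceSet) (j : ℕ) :
    (FacesOf Δ (j + 1) → k) →ₗ[k] (FacesOf Δ j → k) :=
  (boundaryMatrix k Δ j).mulVecLin

/-- The reduced Betti numbers `β̃_i(Δ; k)` of `Δ` over `k` (reduced simplicial homology). -/
noncomputable def reducedBetti (k : Type*) [Field k] (Δ : FaceSet) : ℤ → ℕ
  | Int.ofNat i =>
      finrank k (LinearMap.ker (bnd k Δ i)) -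
        finrank k ↥(LinearMap.range (bnd k Δ (i + 1)) ⊓ LinearMap.ker (bnd k Δ i))
  | Int.negSucc 0 =>
      finrank k (FacesOf Δ 0 → k) - finrank k ↥(LinearMap.range (bnd k Δ 0))
  | Int.negSucc (_ + 1) => 0

/-- `Δ` has the same reduced homology over `k` as the sphere `S^n`. -/
def SameHomologyAs (k : Type*) [Field k] (Δ : FaceSet) (n : ℤ) : Prop :=
  ∀ i : ℤ, reducedBetti k Δ i = if i = n then 1 else 0

/-- `Δ` is a `k`-homology manifold of dimension `n`: the link of every nonempty face `σ`
has the reduced `k`-homology of a sphere of dimension `n - |σ|`. -/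
def IsHomologyManifold (k : Type*) [Field k] (Δ : FaceSet) (n : ℕ) : Prop :=
  IsComplex Δ ∧ hasDim Δ n ∧
    ∀ σ ∈ Δ, σ ≠ ∅ → SameHomologyAs k (linkFS Δ σ) ((n : ℤ) - σ.card)

/-- `Δ` is a `k`-homology `n`-sphere: a `k`-homology `n`-manifold with the same
`k`-homology as `S^n`. -/
def IsHomologySphere (k : Type*) [Field k] (Δ : FaceSet) (n : ℕ) : Prop :=
  IsHomologyManifold k Δ n ∧ SameHomologyAs k Δ (n : ℤ)


section AuxHelpers

open Finset MvPolynomial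

lemma aux_finsupp_degree_one {d : ℕ →₀ ℕ} (h : Finsupp.degree d = 1) :
    ∃ n, d = Finsupp.single n 1 := by
  classical
  have hs : d.support.Nonempty := by
    rcases Finset.eq_empty_or_nonempty d.support with h0 | h0
    · exfalso
      have : d = 0 := Finsupp.support_eq_empty.mp h0
      simp [this, Finsupp.degree] at h
    · exact h0
  obtain ⟨n, hn⟩ := hs
  refine ⟨n, ?_⟩
  have hdn : 1 ≤ d n := Nat.one_le_iff_ne_zero.mpr (Finsupp.mem_support_iff.mp hn)
  have hsum : ∑ a ∈ d.support, d a = 1 := h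
  rw [← Finset.add_sum_erase _ _ hn] at hsum
  have hdn1 : d n = 1 := by omega
  ext a
  by_cases ha : a = n
  · simp [ha, hdn1]
  · rw [Finsupp.single_apply, if_neg (Ne.symm ha)]
    by_cases has : a ∈ d.support
    · have : d a ≤ ∑ a ∈ d.support.erase n, d a :=
        Finset.single_le_sum (fun _ _ => Nat.zero_le _) (Finset.mem_erase.mpr ⟨ha, has⟩)
      omega
    · exact Finsupp.notMem_support_iff.mp has

lemma aux_mono_single {k : Type*} [Field k] (n : ℕ) (a : k) :
    (monomial (Finsupp.single n 1)) a = C a * X n := by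
  rw [X, C_mul_monomial, mul_one]

lemma aux_hom1_support {k : Type*} [Field k] {p : MvPolynomial ℕ k} (hp : p.IsHomogeneous 1)
    {d : ℕ →₀ ℕ} (hd : d ∈ p.support) : ∃ n, d = Finsupp.single n 1 := by
  refine aux_finsupp_degree_one ?_
  have := hp (MvPolynomial.mem_support_iff.mp hd)
  rw [Finsupp.degree_eq_weight_one]; exact this

lemma aux_hom1_mem_ideal {k : Type*} [Field k] {p : MvPolynomial ℕ k} (hp : p.IsHomogeneous 1)
    (I : Ideal (MvPolynomial ℕ k)) (h : ∀ n, coeff (Finsupp.single n 1) p ≠ 0 → X n ∈ I) :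
    p ∈ I := by
  classical
  rw [p.as_sum]
  refine Ideal.sum_mem I fun d hd => ?_
  obtain ⟨n, rfl⟩ := aux_hom1_support hp hd
  rw [aux_mono_single]
  exact Ideal.mul_mem_left I _ (h n (MvPolynomial.mem_support_iff.mp hd))

lemma aux_hom1_aeval {k : Type*} [Field k] {R : Type*} [CommRing R] [Algebra k R]
    {p : MvPolynomial ℕ k} (hp : p.IsHomogeneous 1) (g : ℕ → R) (T : Finset ℕ)
    (hg : ∀ n ∉ T, g n = 0) :
    aeval g p = ∑ n ∈ T, algebraMap k R (coeff (Finsupp.single n 1) p) * g n := by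
  classical
  set B : Finset ℕ := T ∪ p.support.sup Finsupp.support with hB
  set F : ℕ → R := fun n => algebraMap k R (coeff (Finsupp.single n 1) p) * g n with hF
  have step1 : aeval g p = ∑ n ∈ B.filter (fun n => Finsupp.single n 1 ∈ p.support), F n := by
    conv_lhs => rw [p.as_sum]
    rw [map_sum]
    refine (Finset.sum_bij (fun n _ => Finsupp.single n 1) ?_ ?_ ?_ ?_).symm
    · intro n hn
      exact (Finset.mem_filter.mp hn).2
    · intro n₁ _ n₂ _ h
      exact Finsupp.single_left_injective one_ne_zero h
    · intro d hd
      obtain ⟨n, rfl⟩ := aux_hom1_support hp hd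
      refine ⟨n, Finset.mem_filter.mpr ⟨?_, hd⟩, rfl⟩
      refine Finset.mem_union_right _ ?_
      have h1 : (Finsupp.single n 1).support ⊆ p.support.sup Finsupp.support :=
        Finset.le_sup hd
      exact h1 (by simp)
    · intro n hn
      rw [aeval_monomial, hF]
      simp [Finsupp.prod_single_index]
  rw [step1]
  have h2 : ∑ n ∈ B.filter (fun n => Finsupp.single n 1 ∈ p.support), F n = ∑ n ∈ B, F n := by
    refine Finset.sum_subset (Finset.filter_subset _ _) ?_
    intro n hn hn'
    have : Finsupp.single n 1 ∉ p.support := fun hc => hn' (Finset.mem_filter.mpr ⟨hn, hc⟩)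
    rw [hF]
    simp [MvPolynomial.notMem_support_iff.mp this]
  have h3 : ∑ n ∈ T, F n = ∑ n ∈ B, F n := by
    refine Finset.sum_subset Finset.subset_union_left ?_
    intro n _ hnT
    rw [hF]; simp [hg n hnT]
  rw [h2, h3]

lemma aux_mem_join {V W : Finset ℕ} (hVW : Disjoint V W) {s : Finset ℕ} :
    s ∈ joinFS (simplexOn V) (boundaryOn W) ↔ s ⊆ V ∪ W ∧ ¬ W ⊆ s := by
  classical
  rw [joinFS, Finset.mem_image₂]
  constructor
  · rintro ⟨a, ha, b, hb, rfl⟩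
    rw [simplexOn, Finset.mem_powerset] at ha
    rw [boundaryOn, Finset.mem_erase, Finset.mem_powerset] at hb
    refine ⟨Finset.union_subset (ha.trans Finset.subset_union_left)
      (hb.2.trans Finset.subset_union_right), ?_⟩
    intro hWs
    refine hb.1 (Finset.Subset.antisymm hb.2 ?_)
    intro w hw
    rcases Finset.mem_union.mp (hWs hw) with h | h
    · exact absurd hw (Finset.disjoint_left.mp hVW (ha h))
    · exact h
  · rintro ⟨hsub, hns⟩
    refine ⟨s ∩ V, ?_, s ∩ W, ?_, ?_⟩
    · rw [simplexOn, Finset.mem_powerset]; exact Finset.inter_subset_right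
    · rw [boundaryOn, Finset.mem_erase, Finset.mem_powerset]
      exact ⟨fun h => hns (h ▸ Finset.inter_subset_left), Finset.inter_subset_right⟩
    · rw [← Finset.inter_union_distrib_left]
      exact Finset.inter_eq_left.mpr hsub

end AuxHelpers

set_option maxHeartbeats 2000000 in
/-- **Face monomials generate the top degree for `Δ^i * ∂Δ^j` with a generic l.s.o.p.**
Let `Δ = Δ^i * ∂Δ^j` and let `Θ` be a generic l.s.o.p. for `k[Δ]` (`k` infinite). Then
for every `(j-1)`-dimensional face `σ` of `Δ`, the face monomial `x_σ` generates the
one-dimensional vector space `(k[Δ]/Θ)_j ≅ k`. -/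
theorem face_monomial_generates_join_simplex_boundary (k : Type*) [Field k] [Infinite k]
    (i j : ℕ) (hj : 1 ≤ j) (V W : Finset ℕ) (hV : V.card = i + 1) (hW : W.card = j + 1)
    (hVW : Disjoint V W) (Δ : FaceSet) (hΔ : Δ = joinFS (simplexOn V) (boundaryOn W))
    {Θ : Fin (i + j + 1) → MvPolynomial ℕ k} (hΘ : IsGenericLSOP k Δ Θ)
    (σ : Finset ℕ) (hσ : σ ∈ Δ) (hcard : σ.card = j) :
    finrank k (gradedPiece k Δ (Set.range Θ) j) = 1 ∧
    Submodule.span k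
        {Ideal.Quotient.mk (SRIdeal k Δ ⊔ Ideal.span (Set.range Θ)) (faceMonomial k σ)} =
      gradedPiece k Δ (Set.range Θ) j := by
  classical
  obtain ⟨⟨hΘhom, _⟩, hgen⟩ := hΘ
  set I : Ideal (MvPolynomial ℕ k) := SRIdeal k Δ ⊔ Ideal.span (Set.range Θ) with hI
  set U : Finset ℕ := V ∪ W with hUdef
  have hmem : ∀ s : Finset ℕ, s ∈ Δ ↔ s ⊆ U ∧ ¬ W ⊆ s := by
    intro s; rw [hΔ]; exact aux_mem_join hVW
  have hUcard : U.card = i + j + 2 := by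
    rw [hUdef, Finset.card_union_of_disjoint hVW, hV, hW]; omega
  have hWsub : ∀ v ∈ U, ¬ W ⊆ ({v} : Finset ℕ) := by
    intro v _ hWs
    have := Finset.card_le_card hWs
    rw [hW, Finset.card_singleton] at this
    omega
  have hsingle : ∀ v ∈ U, ({v} : Finset ℕ) ∈ Δ := fun v hv =>
    (hmem _).mpr ⟨Finset.singleton_subset_iff.mpr hv, hWsub v hv⟩
  have hvert : ∀ v ∈ U, v ∈ vertices Δ := by
    intro v hv
    have h1 : id ({v} : Finset ℕ) ≤ Δ.sup id := Finset.le_sup (hsingle v hv)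
    exact h1 (Finset.mem_singleton_self v)
  set e := U.orderIsoOfFin hUcard with he
  set M : Matrix (Fin (i+j+1)) (Fin (i+j+2)) k :=
    Matrix.of fun a b => coeff (Finsupp.single ((e b : ℕ)) 1) (Θ a) with hM
  have hminor : ∀ b : Fin (i+j+2), (M.submatrix id b.succAbove).det ≠ 0 := by
    intro b
    have hginj : Function.Injective (fun a : Fin (i+j+1) => ((e (b.succAbove a) : ℕ))) := by
      intro a₁ a₂ h12
      have : e (b.succAbove a₁) = e (b.succAbove a₂) := Subtype.ext h12
      exact Fin.succAbove_right_injective (e.injective this)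
    have := hgen _ hginj (fun a => hvert _ (e (b.succAbove a)).2)
    exact this
  set c' : Fin (i+j+2) → k := fun b => (-1)^(b:ℕ) * (M.submatrix id b.succAbove).det with hc'
  have hc'0 : ∀ b, c' b ≠ 0 := fun b =>
    mul_ne_zero (pow_ne_zero _ (neg_ne_zero.mpr one_ne_zero)) (hminor b)
  have hcramer : ∀ a : Fin (i+j+1), ∑ b, M a b * c' b = 0 := by
    intro a
    set A : Matrix (Fin (i+j+2)) (Fin (i+j+2)) k := Matrix.of (Fin.cons (M a) M) with hA
    have hdet0 : A.det = 0 := by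
      refine Matrix.det_zero_of_row_eq (i := 0) (j := a.succ) (Fin.succ_ne_zero a).symm ?_
      show (Fin.cons (M a) M : Fin (i+j+2) → Fin (i+j+2) → k) 0 = (Fin.cons (M a) M : Fin (i+j+2) → Fin (i+j+2) → k) a.succ
      rfl
    have hexp := Matrix.det_succ_row_zero A
    rw [hdet0] at hexp
    have hsub : ∀ b : Fin (i+j+2), A.submatrix Fin.succ b.succAbove = M.submatrix id b.succAbove := by
      intro b
      ext r s
      show (Fin.cons (M a) M : Fin (i+j+2) → Fin (i+j+2) → k) r.succ (b.succAbove s) = M r (b.succAbove s)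
      rfl
    have : ∑ b : Fin (i+j+2), (-1:k)^(b:ℕ) * A 0 b * (A.submatrix Fin.succ b.succAbove).det
        = ∑ b, M a b * c' b := by
      refine Finset.sum_congr rfl fun b _ => ?_
      rw [hsub b, hc']
      have hA0 : A 0 b = M a b := by
        show (Fin.cons (M a) M : Fin (i+j+2) → Fin (i+j+2) → k) 0 b = M a b
        rfl
      rw [hA0]; ring
    rw [this] at hexp
    exact hexp.symm
  set c : ℕ → k := fun n => if h : n ∈ U then c' (e.symm ⟨n, h⟩) else 0 with hcdef
  have hce : ∀ b, c ((e b : ℕ)) = c' b := by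
    intro b
    have hb : ((e b : ℕ)) ∈ U := (e b).2
    simp only [hcdef, dif_pos hb]
    congr 1
    have : (⟨(e b : ℕ), hb⟩ : {x // x ∈ U}) = e b := Subtype.ext rfl
    rw [this, OrderIso.symm_apply_apply]
  have hcU : ∀ n ∈ U, c n ≠ 0 := by
    intro n hn
    simp only [hcdef, dif_pos hn]
    exact hc'0 _
  have hcnotU : ∀ n ∉ U, c n = 0 := by
    intro n hn
    simp only [hcdef, dif_neg hn]
  -- the target ring
  set t : Polynomial k ⧸ Ideal.span {(Polynomial.X : Polynomial k) ^ (j+1)} :=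
    Ideal.Quotient.mk _ Polynomial.X with ht
  have htpow : t ^ (j+1) = 0 := by
    rw [ht, ← map_pow, Ideal.Quotient.eq_zero_iff_mem]
    exact Ideal.subset_span rfl
  have htj : t ^ j ≠ 0 := by
    rw [ht, ← map_pow, Ne, Ideal.Quotient.eq_zero_iff_mem, Ideal.mem_span_singleton]
    intro hdvd
    have := Polynomial.natDegree_le_of_dvd hdvd (pow_ne_zero _ Polynomial.X_ne_zero)
    simp [Polynomial.natDegree_X_pow] at this
  set g : ℕ → (Polynomial k ⧸ Ideal.span {(Polynomial.X : Polynomial k) ^ (j+1)}) :=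
    fun n => algebraMap k _ (c n) * t with hg
  have hgz : ∀ n ∉ U, g n = 0 := by
    intro n hn
    rw [hg]
    simp only [hcnotU n hn, map_zero, zero_mul]
  have hface : ∀ s : Finset ℕ, aeval g (faceMonomial k s)
      = algebraMap k _ (∏ n ∈ s, c n) * t ^ s.card := by
    intro s
    rw [faceMonomial, map_prod]
    have : ∀ n ∈ s, aeval g (X n : MvPolynomial ℕ k) = algebraMap k _ (c n) * t := by
      intro n _
      rw [aeval_X, hg]
    rw [Finset.prod_congr rfl this, Finset.prod_mul_distrib, ← map_prod, Finset.prod_const]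
  have hgSR : ∀ q ∈ SRIdeal k Δ, aeval g q = 0 := by
    intro q hq
    refine Submodule.span_induction ?_ ?_ ?_ ?_ hq
    · rintro f ⟨s, hs, rfl⟩
      rw [hface]
      rcases (not_and_or.mp (fun hc => hs ((hmem s).mpr hc))) with hns | hWs
      · obtain ⟨n0, hn0s, hn0U⟩ := Finset.not_subset.mp hns
        have : (∏ n ∈ s, c n) = 0 := Finset.prod_eq_zero hn0s (hcnotU n0 hn0U)
        rw [this, map_zero, zero_mul]
      · rw [not_not] at hWs
        have hcards : j + 1 ≤ s.card := by
          have := Finset.card_le_card hWs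
          omega
        have : t ^ s.card = 0 := by
          have : t ^ s.card = t ^ (j+1) * t ^ (s.card - (j+1)) := by
            rw [← pow_add]
            congr 1
            omega
          rw [this, htpow, zero_mul]
        rw [this, mul_zero]
    · simp
    · intro x y _ _ hx hy
      rw [map_add, hx, hy, add_zero]
    · intro a x _ hx
      rw [smul_eq_mul, map_mul, hx, mul_zero]
  have hgΘ : ∀ a, aeval g (Θ a) = 0 := by
    intro a
    rw [aux_hom1_aeval (hΘhom a) g U hgz]
    have : ∀ n ∈ U, algebraMap k _ (coeff (Finsupp.single n 1) (Θ a)) * g n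
        = algebraMap k _ (coeff (Finsupp.single n 1) (Θ a) * c n) * t := by
      intro n _
      rw [hg, map_mul]
      ring
    rw [Finset.sum_congr rfl this, ← Finset.sum_mul, ← map_sum]
    have hsum : ∑ n ∈ U, coeff (Finsupp.single n 1) (Θ a) * c n = ∑ b, M a b * c' b := by
      rw [← Finset.sum_coe_sort U]
      rw [← Fintype.sum_equiv e.toEquiv (fun b => coeff (Finsupp.single ((e b : ℕ)) 1) (Θ a) * c ((e b : ℕ)))
        (fun x => coeff (Finsupp.single ((x : ℕ)) 1) (Θ a) * c ((x : ℕ))) (fun b => rfl)]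
      refine Finset.sum_congr rfl fun b _ => ?_
      rw [hce b, hM]
      rfl
    rw [hsum, hcramer, map_zero, zero_mul]
  have hgI : ∀ q ∈ I, aeval g q = 0 := by
    intro q hq
    rw [hI] at hq
    have : I ≤ RingHom.ker (aeval g : MvPolynomial ℕ k →ₐ[k] _).toRingHom := by
      rw [hI]
      refine sup_le ?_ ?_
      · intro q hq
        exact hgSR q hq
      · rw [Ideal.span_le]
        rintro f ⟨a, rfl⟩
        exact hgΘ (a := a)
    exact this (hI ▸ hq)
  have hσU : σ ⊆ U := ((hmem σ).mp hσ).1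
  have hprodc : (∏ n ∈ σ, c n) ≠ 0 := Finset.prod_ne_zero_iff.mpr fun n hn => hcU n (hσU hn)
  have hmkσ : Ideal.Quotient.mk I (faceMonomial k σ) ≠ 0 := by
    intro h0
    have hmem0 : faceMonomial k σ ∈ I := Ideal.Quotient.eq_zero_iff_mem.mp h0
    have h1 := hgI _ hmem0
    rw [hface, hcard, ← Algebra.smul_def] at h1
    apply htj
    calc t^j = (∏ n ∈ σ, c n)⁻¹ • ((∏ n ∈ σ, c n) • t ^ j) := by
          rw [smul_smul, inv_mul_cancel₀ hprodc, one_smul]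
      _ = 0 := by rw [h1, smul_zero]
  set v0 : ℕ := (e 0 : ℕ) with hv0
  have hv0U : v0 ∈ U := (e 0).2
  have hcv0 : c v0 = c' 0 := by
    have := hce 0
    rw [← hv0] at this
    exact this
  have key1 : ∀ u ∈ U, (C (c v0) * X u - C (c u) * X v0 : MvPolynomial ℕ k) ∈ I := by
    intro u hu
    by_cases huv : u = v0
    · rw [huv, sub_self]
      exact zero_mem I
    set bu : Fin (i+j+2) := e.symm ⟨u, hu⟩ with hbu
    have hebu : ((e bu : ℕ)) = u := by rw [hbu, OrderIso.apply_symm_apply]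
    have hbu0 : bu ≠ 0 := by
      intro h0
      apply huv
      rw [← hebu, h0, hv0]
    have hcu : c u = c' bu := by
      have := hce bu
      rwa [hebu] at this
    set w : Fin (i+j+2) → k := fun b =>
      c' 0 * (if b = bu then (1:k) else 0) - c' bu * (if b = (0 : Fin (i+j+2)) then (1:k) else 0) with hwdef
    have hsingle_sum : ∀ (x : Fin (i+j+2)) (a : k),
        ∑ b, (a * (if b = x then (1:k) else 0)) * c' b = a * c' x := by
      intro x a
      rw [Finset.sum_eq_single x]
      · rw [if_pos rfl, mul_one]
      · intro b _ hbx
        rw [if_neg hbx, mul_zero, zero_mul]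
      · intro hx
        exact absurd (Finset.mem_univ x) hx
    have hwdot : ∑ b, w b * c' b = 0 := by
      have : ∀ b, w b * c' b = (c' 0 * (if b = bu then (1:k) else 0)) * c' b
          - (c' bu * (if b = (0 : Fin (i+j+2)) then (1:k) else 0)) * c' b := by
        intro b
        rw [hwdef]
        ring
      rw [Finset.sum_congr rfl fun b _ => this b, Finset.sum_sub_distrib,
        hsingle_sum, hsingle_sum]
      ring
    set N0 := M.submatrix id (0 : Fin (i+j+2)).succAbove with hN0
    have hN0det : IsUnit N0.det := (hminor 0).isUnit
    set w' : Fin (i+j+1) → k := fun s => w s.succ with hw'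
    set y : Fin (i+j+1) → k := Matrix.vecMul w' N0⁻¹ with hy
    have hyN0 : Matrix.vecMul y N0 = w' := by
      rw [hy, Matrix.vecMul_vecMul, Matrix.nonsing_inv_mul _ hN0det, Matrix.vecMul_one]
    set vm : Fin (i+j+2) → k := fun b => ∑ a, y a * M a b with hvm
    have hvmsucc : ∀ s : Fin (i+j+1), vm s.succ = w s.succ := by
      intro s
      have h1 : vm s.succ = Matrix.vecMul y N0 s := by
        rw [hvm]
        show ∑ a, y a * M a s.succ = ∑ a, y a * N0 a s
        refine Finset.sum_congr rfl fun a _ => ?_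
        congr 1
      rw [h1, hyN0, hw']
    have hvmdot : ∑ b, vm b * c' b = 0 := by
      have h1 : ∀ b, vm b * c' b = ∑ a, y a * (M a b * c' b) := by
        intro b
        rw [hvm, Finset.sum_mul]
        refine Finset.sum_congr rfl fun a _ => ?_
        ring
      rw [Finset.sum_congr rfl fun b _ => h1 b, Finset.sum_comm]
      refine Finset.sum_eq_zero fun a _ => ?_
      rw [← Finset.mul_sum, hcramer, mul_zero]
    have hvm0 : vm 0 = w 0 := by
      have e1 : ∑ b, vm b * c' b = vm 0 * c' 0 + ∑ s : Fin (i+j+1), vm s.succ * c' s.succ :=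
        Fin.sum_univ_succ _
      have e2 : ∑ b, w b * c' b = w 0 * c' 0 + ∑ s : Fin (i+j+1), w s.succ * c' s.succ :=
        Fin.sum_univ_succ _
      rw [hvmdot] at e1
      rw [hwdot] at e2
      have e3 : ∑ s : Fin (i+j+1), vm s.succ * c' s.succ = ∑ s : Fin (i+j+1), w s.succ * c' s.succ :=
        Finset.sum_congr rfl fun s _ => by rw [hvmsucc]
      rw [e3] at e1
      exact mul_right_cancel₀ (hc'0 0) (add_right_cancel (e1.symm.trans e2))
    have hvmw : ∀ b, vm b = w b := by
      intro b
      refine Fin.cases ?_ ?_ b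
      · exact hvm0
      · exact hvmsucc
    -- the correction polynomial
    set q : MvPolynomial ℕ k :=
      (∑ a, C (y a) * Θ a) - (C (c v0) * X u - C (c u) * X v0) with hq
    have hqhom : q.IsHomogeneous 1 := by
      refine MvPolynomial.IsHomogeneous.sub ?_ ?_
      · exact MvPolynomial.IsHomogeneous.sum _ _ _ fun a _ => (hΘhom a).C_mul _
      · exact MvPolynomial.IsHomogeneous.sub ((isHomogeneous_X k u).C_mul _)
          ((isHomogeneous_X k v0).C_mul _)
    have hXcoeff : ∀ n m : ℕ, coeff (Finsupp.single n 1) (X m : MvPolynomial ℕ k)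
        = if n = m then 1 else 0 := by
      intro n m
      rw [MvPolynomial.coeff_X']
      by_cases h : n = m
      · rw [if_pos h, if_pos]
        rw [h]
      · rw [if_neg h, if_neg]
        intro hc
        exact h ((Finsupp.single_left_inj one_ne_zero).mp hc).symm
    have hqcoeff : ∀ n ∈ U, coeff (Finsupp.single n 1) q = 0 := by
      intro n hn
      set b : Fin (i+j+2) := e.symm ⟨n, hn⟩ with hb
      have heb : ((e b : ℕ)) = n := by rw [hb, OrderIso.apply_symm_apply]
      have hcoeffsum : coeff (Finsupp.single n 1) (∑ a, C (y a) * Θ a) = vm b := by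
        rw [MvPolynomial.coeff_sum, hvm]
        refine Finset.sum_congr rfl fun a _ => ?_
        rw [MvPolynomial.coeff_C_mul]
        congr 1
        rw [hM]
        show coeff (Finsupp.single n 1) (Θ a) = coeff (Finsupp.single ((e b : ℕ)) 1) (Θ a)
        rw [heb]
      have hwb : coeff (Finsupp.single n 1) (C (c v0) * X u - C (c u) * X v0 : MvPolynomial ℕ k)
          = w b := by
        simp only [hwdef]
        rw [MvPolynomial.coeff_sub, MvPolynomial.coeff_C_mul, MvPolynomial.coeff_C_mul,
          hXcoeff, hXcoeff, hcv0, hcu]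
        by_cases hnu : n = u
        · have hbbu : b = bu := by
            rw [hb, hbu]
            congr 1
            exact Subtype.ext hnu
          have hnv0 : ¬ n = v0 := by rw [hnu]; exact huv
          rw [if_pos hnu, if_neg hnv0, hbbu, if_pos rfl, if_neg hbu0]
        · have hbbu : b ≠ bu := by
            intro hc
            apply hnu
            rw [← heb, hc, hebu]
          by_cases hnv : n = v0
          · have hb0 : b = 0 := by
              rw [hb]
              have : (⟨n, hn⟩ : {x // x ∈ U}) = e 0 :=
                Subtype.ext (show n = ((e 0 : ℕ)) by rw [hnv, hv0])
              rw [this, OrderIso.symm_apply_apply]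
            rw [if_neg hnu, if_pos hnv, hb0, if_neg (Ne.symm hbu0), if_pos rfl]
          · have hb0 : b ≠ 0 := by
              intro hc
              apply hnv
              rw [← heb, hc, hv0]
            rw [if_neg hnu, if_neg hnv, if_neg hbbu, if_neg hb0]
      rw [hq, MvPolynomial.coeff_sub, hcoeffsum, hwb, hvmw, sub_self]
    have hqSR : q ∈ SRIdeal k Δ := by
      refine aux_hom1_mem_ideal hqhom _ ?_
      intro n hcf
      have hnU : n ∉ U := fun hn => hcf (hqcoeff n hn)
      have hnΔ : ({n} : Finset ℕ) ∉ Δ := by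
        intro hc
        exact hnU (((hmem _).mp hc).1 (Finset.mem_singleton_self n))
      refine Ideal.subset_span ⟨{n}, hnΔ, ?_⟩
      rw [faceMonomial, Finset.prod_singleton]
    have hsumI : (∑ a, C (y a) * Θ a : MvPolynomial ℕ k) ∈ I := by
      rw [hI]
      refine Ideal.sum_mem _ fun a _ => Ideal.mul_mem_left _ _ ?_
      exact Ideal.mem_sup_right (Ideal.subset_span ⟨a, rfl⟩)
    have : (C (c v0) * X u - C (c u) * X v0 : MvPolynomial ℕ k)
        = (∑ a, C (y a) * Θ a) - q := by
      rw [hq]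
      ring
    rw [this]
    exact Ideal.sub_mem I hsumI (hI ▸ Ideal.mem_sup_left hqSR)
  set mkq := Ideal.Quotient.mkₐ k I with hmkqdef
  have hmkqmk : ∀ p : MvPolynomial ℕ k, mkq p = Ideal.Quotient.mk I p := fun p => rfl
  have hCa : ∀ a : k, mkq (C a) = algebraMap k _ a := by
    intro a
    rw [← MvPolynomial.algebraMap_eq]
    exact (Ideal.Quotient.mkₐ k I).commutes a
  set z := mkq (X v0) with hzdef
  have hXnotU : ∀ n ∉ U, mkq (X n) = 0 := by
    intro n hn
    rw [hmkqmk, Ideal.Quotient.eq_zero_iff_mem]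
    have hnΔ : ({n} : Finset ℕ) ∉ Δ := fun hc =>
      hn (((hmem _).mp hc).1 (Finset.mem_singleton_self n))
    refine hI ▸ Ideal.mem_sup_left (Ideal.subset_span ⟨{n}, hnΔ, ?_⟩)
    rw [faceMonomial, Finset.prod_singleton]
  have hc0 : c v0 ≠ 0 := hcU v0 hv0U
  have hXu : ∀ u ∈ U, mkq (X u) = algebraMap k _ (c u * (c v0)⁻¹) * z := by
    intro u hu
    have h1 : mkq (C (c v0) * X u - C (c u) * X v0) = 0 := by
      rw [hmkqmk, Ideal.Quotient.eq_zero_iff_mem]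
      exact key1 u hu
    rw [map_sub, map_mul, map_mul, sub_eq_zero, hCa, hCa] at h1
    calc mkq (X u) = algebraMap k _ ((c v0)⁻¹ * c v0) * mkq (X u) := by
          rw [inv_mul_cancel₀ hc0, map_one, one_mul]
      _ = algebraMap k _ ((c v0)⁻¹) * (algebraMap k _ (c v0) * mkq (X u)) := by
          rw [map_mul, mul_assoc]
      _ = algebraMap k _ ((c v0)⁻¹) * (algebraMap k _ (c u) * z) := by rw [h1]
      _ = algebraMap k _ (c u * (c v0)⁻¹) * z := by
          rw [← mul_assoc, ← map_mul, mul_comm ((c v0)⁻¹) (c u)]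
  set μ : k := ∏ n ∈ σ, (c n * (c v0)⁻¹) with hμdef
  have hμ0 : μ ≠ 0 := by
    rw [hμdef]
    exact Finset.prod_ne_zero_iff.mpr fun n hn =>
      mul_ne_zero (hcU n (hσU hn)) (inv_ne_zero hc0)
  have hfσ : mkq (faceMonomial k σ) = algebraMap k _ μ * z ^ j := by
    rw [faceMonomial, map_prod, Finset.prod_congr rfl (fun n hn => hXu n (hσU hn)),
      Finset.prod_mul_distrib, ← map_prod, Finset.prod_const, hcard, hμdef]
  have hzj : z ^ j = algebraMap k _ μ⁻¹ * mkq (faceMonomial k σ) := by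
    rw [hfσ, ← mul_assoc, ← map_mul, inv_mul_cancel₀ hμ0, map_one, one_mul]
  have hmonospan : ∀ d : ℕ →₀ ℕ, Finsupp.degree d = j →
      mkq (monomial d 1) ∈ Submodule.span k {Ideal.Quotient.mk I (faceMonomial k σ)} := by
    intro d hd
    have hmono : (monomial d (1:k)) = ∏ n ∈ d.support, (X n : MvPolynomial ℕ k) ^ d n := by
      rw [monomial_eq, C_1, one_mul, Finsupp.prod]
    by_cases hsupp : ↑d.support ⊆ (U : Finset ℕ)
    · have heach : ∀ n ∈ d.support, mkq ((X n : MvPolynomial ℕ k) ^ d n)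
          = algebraMap k _ ((c n * (c v0)⁻¹) ^ d n) * z ^ d n := by
        intro n hn
        rw [map_pow, hXu n (hsupp hn), mul_pow, map_pow]
      have : mkq (monomial d 1)
          = algebraMap k _ (∏ n ∈ d.support, (c n * (c v0)⁻¹) ^ d n) * z ^ j := by
        rw [hmono, map_prod, Finset.prod_congr rfl heach, Finset.prod_mul_distrib,
          ← map_prod, Finset.prod_pow_eq_pow_sum,
          show ∑ n ∈ d.support, d n = j from hd]
      rw [this, hzj, ← mul_assoc, ← map_mul]
      rw [← Algebra.smul_def]
      exact Submodule.smul_mem _ _ (Submodule.mem_span_singleton_self _)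
    · obtain ⟨n0, hn0d, hn0U⟩ := Finset.not_subset.mp hsupp
      have hz0 : mkq ((X n0 : MvPolynomial ℕ k) ^ d n0) = 0 := by
        rw [map_pow, hXnotU n0 hn0U, zero_pow (Finsupp.mem_support_iff.mp hn0d)]
      have : mkq (monomial d 1) = 0 := by
        rw [hmono, map_prod]
        exact Finset.prod_eq_zero hn0d hz0
      rw [this]
      exact Submodule.zero_mem _
  have hspan : ∀ p : MvPolynomial ℕ k, p.IsHomogeneous j →
      mkq p ∈ Submodule.span k {Ideal.Quotient.mk I (faceMonomial k σ)} := by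
    intro p hp
    rw [p.as_sum, map_sum]
    refine Submodule.sum_mem _ fun d hd => ?_
    have hmono : (monomial d (coeff d p)) = C (coeff d p) * monomial d 1 := by
      rw [C_mul_monomial, mul_one]
    rw [hmono, map_mul, hCa, ← Algebra.smul_def]
    refine Submodule.smul_mem _ _ (hmonospan d ?_)
    have := hp (MvPolynomial.mem_support_iff.mp hd)
    rw [Finsupp.degree_eq_weight_one]; exact this
  have hσhom : (faceMonomial k σ).IsHomogeneous j := by
    have := MvPolynomial.IsHomogeneous.prod σ (fun n => (X n : MvPolynomial ℕ k))
      (fun _ => 1) (fun n _ => isHomogeneous_X k n)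
    rw [Finset.sum_const, smul_eq_mul, mul_one, hcard] at this
    exact this
  have hle2 : Submodule.span k {Ideal.Quotient.mk I (faceMonomial k σ)}
      ≤ gradedPiece k Δ (Set.range Θ) j := by
    rw [Submodule.span_le, Set.singleton_subset_iff]
    exact ⟨faceMonomial k σ, (mem_homogeneousSubmodule _ _).mpr hσhom, rfl⟩
  have hle1 : gradedPiece k Δ (Set.range Θ) j
      ≤ Submodule.span k {Ideal.Quotient.mk I (faceMonomial k σ)} := by
    rintro x ⟨p, hp, rfl⟩
    exact hspan p ((mem_homogeneousSubmodule _ _).mp hp)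
  have heq : Submodule.span k {Ideal.Quotient.mk I (faceMonomial k σ)}
      = gradedPiece k Δ (Set.range Θ) j := le_antisymm hle2 hle1
  refine ⟨?_, heq⟩
  rw [← heq]
  exact finrank_span_singleton hmkσ
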